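/- arXiv:1907.00655 — 3 statements merged into one kernel-verified Lean document; each statement's English description precedes it below -/
import Mathlib

section
/- For a finite set of matrices A_1,...,A_m in R^{n×n} and a strongly connected labeled graph G(V,E) with admissible paths G_k, the limit defining the constrained joint spectral radius, lim_{k→∞} max_{s∈G_k} ‖A_s‖^{1/k}, exists (where A_s denotes the product of matrices along the path s). -/
open scoped Classical
open Filter MvPolynomial

/-- The Frobenius norm, a submultiplicative matrix norm. -/
noncomputable def frob {a b : ℕ} (M : Matrix (Fin a) (Fin b) ℝ) : ℝ :=
  Real.sqrt (∑ i, ∑ j, (M i j)^2)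

/-- The set `E_k` of paths of length `k` in the labeled graph with edge set `E ⊆ V × V × L`:
sequences of `k` edges of `E` such that the target of each edge is the source of the next. -/
noncomputable def pathSet {V L : Type*} [Fintype V] [Fintype L]
    (E : Finset (V × V × L)) (k : ℕ) : Finset (Fin k → V × V × L) :=
  Finset.univ.filter (fun s =>
    (∀ i, s i ∈ E) ∧
    ∀ (i : ℕ) (h : i + 1 < k), (s ⟨i, Nat.lt_of_succ_lt h⟩).2.1 = (s ⟨i+1, h⟩).1)

/-- The sequence of labels along a path. -/
def labels {V L : Type*} {k : ℕ} (s : Fin k → V × V × L) : Fin k → L :=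
  fun i => (s i).2.2

/-- The product of matrices along a label sequence: `A_s = A_{σ_k} ⋯ A_{σ_1}`. -/
noncomputable def prodA {n : ℕ} {L : Type*} (A : L → Matrix (Fin n) (Fin n) ℝ)
    {k : ℕ} (σ : Fin k → L) : Matrix (Fin n) (Fin n) ℝ :=
  ((List.ofFn σ).reverse.map A).prod

/-- Maximum of a real-valued function over a (nonempty) finite set. -/
noncomputable def maxOver {α : Type*} (s : Finset α) (f : α → ℝ) : ℝ :=
  sSup (f '' ↑s)

/-- Strong connectivity: every node reaches every node by a path of length ≥ 1. -/
def StronglyConnected {V L : Type*} [Fintype V] [Fintype L]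
    (E : Finset (V × V × L)) : Prop :=
  ∀ u v : V, ∃ k : ℕ, ∃ s ∈ pathSet E (k+1), (s 0).1 = u ∧ (s (Fin.last k)).2.1 = v

/-! ### Auxiliary lemmas -/

attribute [local instance] Matrix.frobeniusSeminormedAddCommGroup

lemma frob_eq_norm {a b : ℕ} (M : Matrix (Fin a) (Fin b) ℝ) : frob M = ‖M‖ := by
  rw [Matrix.frobenius_norm_def, ← Real.sqrt_eq_rpow, frob]
  congr 1
  refine Finset.sum_congr rfl fun i _ => Finset.sum_congr rfl fun j _ => ?_
  rw [Real.rpow_two, Real.norm_eq_abs, sq_abs]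

lemma frob_nonneg {a b : ℕ} (M : Matrix (Fin a) (Fin b) ℝ) : 0 ≤ frob M :=
  Real.sqrt_nonneg _

lemma frob_mul_le {a : ℕ} (M N : Matrix (Fin a) (Fin a) ℝ) :
    frob (M * N) ≤ frob M * frob N := by
  rw [frob_eq_norm, frob_eq_norm, frob_eq_norm]
  exact Matrix.frobenius_norm_mul M N

lemma maxOver_exists {α : Type*} {s : Finset α} (hs : s.Nonempty) (f : α → ℝ) :
    ∃ a ∈ s, maxOver s f = f a := by
  have hfin : (f '' ↑s).Finite := s.finite_toSet.image f
  have hne : (f '' ↑s).Nonempty := (hs.to_set).image f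
  obtain ⟨a, ha, he⟩ := hne.csSup_mem hfin
  exact ⟨a, ha, he.symm⟩

lemma le_maxOver {α : Type*} {s : Finset α} {a : α} (ha : a ∈ s) (f : α → ℝ) :
    f a ≤ maxOver s f :=
  le_csSup ((s.finite_toSet.image f).bddAbove) ⟨a, ha, rfl⟩

lemma maxOver_rpow {α : Type*} {s : Finset α} (hs : s.Nonempty) (f : α → ℝ)
    (hf : ∀ a, 0 ≤ f a) {c : ℝ} (hc : 0 ≤ c) :
    maxOver s (fun a => f a ^ c) = (maxOver s f) ^ c := by
  obtain ⟨a, has, ha⟩ := maxOver_exists hs f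
  obtain ⟨a', has', ha'⟩ := maxOver_exists hs (fun a => f a ^ c)
  apply le_antisymm
  · rw [ha', ha]
    exact Real.rpow_le_rpow (hf a') (ha ▸ le_maxOver has' f) hc
  · rw [ha]
    exact le_maxOver has (fun a => f a ^ c)

lemma mem_pathSet {V L : Type*} [Fintype V] [Fintype L] {E : Finset (V × V × L)} {k : ℕ}
    {s : Fin k → V × V × L} :
    s ∈ pathSet E k ↔ (∀ i, s i ∈ E) ∧
      ∀ (i : ℕ) (h : i + 1 < k), (s ⟨i, Nat.lt_of_succ_lt h⟩).2.1 = (s ⟨i+1, h⟩).1 := by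
  simp [pathSet]

lemma exists_out_edge {V L : Type*} [Fintype V] [Fintype L] {E : Finset (V × V × L)}
    (hSC : StronglyConnected E) (w : V) : ∃ e ∈ E, e.1 = w := by
  obtain ⟨k, s, hs, h0, _⟩ := hSC w w
  exact ⟨s 0, (mem_pathSet.1 hs).1 0, h0⟩

lemma pathSet_nonempty {V L : Type*} [Fintype V] [Fintype L] [Nonempty V]
    {E : Finset (V × V × L)} (hSC : StronglyConnected E) (k : ℕ) :
    (pathSet E k).Nonempty := by
  have hF : ∀ w : V, ∃ e : V × V × L, e ∈ E ∧ e.1 = w := by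
    intro w; obtain ⟨e, he, h1⟩ := exists_out_edge hSC w; exact ⟨e, he, h1⟩
  choose F hFE hF1 using hF
  obtain ⟨v₀⟩ := ‹Nonempty V›
  let g : ℕ → V × V × L := fun i => Nat.rec (F v₀) (fun _ e => F e.2.1) i
  refine ⟨fun i => g i.1, mem_pathSet.2 ⟨?_, ?_⟩⟩
  · intro i
    cases h : i.1 with
    | zero => exact hFE v₀
    | succ j => exact hFE _
  · intro i h
    show (g i).2.1 = (g (i+1)).1
    exact (hF1 (g i).2.1).symm

lemma prodA_split {n : ℕ} {L : Type*} (A : L → Matrix (Fin n) (Fin n) ℝ)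
    {k l : ℕ} (σ : Fin (k + l) → L) :
    prodA A σ = prodA A (fun i : Fin l => σ (Fin.natAdd k i)) *
      prodA A (fun i : Fin k => σ (Fin.castAdd l i)) := by
  unfold prodA
  rw [List.ofFn_add, List.reverse_append, List.map_append, List.prod_append]
  rfl

lemma nat_div_cast_tendsto (m : ℕ) (hm : 1 ≤ m) :
    Tendsto (fun k : ℕ => ((k / m : ℕ) : ℝ) / (k : ℝ)) atTop (nhds (1 / (m : ℝ))) := by
  have hm0 : (0:ℝ) < (m:ℝ) := by exact_mod_cast hm
  have hlow : Tendsto (fun k : ℕ => 1 / (m:ℝ) - 1 / (k:ℝ)) atTop (nhds (1 / (m:ℝ))) := by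
    have := tendsto_one_div_atTop_nhds_zero_nat (𝕜 := ℝ)
    simpa using (tendsto_const_nhds (x := 1 / (m:ℝ))).sub this
  refine tendsto_of_tendsto_of_tendsto_of_le_of_le' hlow tendsto_const_nhds ?_ ?_
  · filter_upwards [eventually_ge_atTop 1] with k hk
    have hk0 : (0:ℝ) < (k:ℝ) := by exact_mod_cast hk
    have hnat : k < m * (k / m) + m := by
      have h1 := Nat.div_add_mod k m
      have h2 := Nat.mod_lt k (show 0 < m by omega)
      omega
    have h1 : (k:ℝ) < (m:ℝ) * ((k / m : ℕ) : ℝ) + m := by exact_mod_cast hnat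
    rw [sub_le_iff_le_add, ← add_div, div_le_div_iff₀ hm0 hk0]
    nlinarith
  · filter_upwards [eventually_ge_atTop 1] with k hk
    have hk0 : (0:ℝ) < (k:ℝ) := by exact_mod_cast hk
    have h2 : ((k / m : ℕ) : ℝ) ≤ (k:ℝ) / (m:ℝ) := Nat.cast_div_le
    calc ((k / m : ℕ) : ℝ) / (k:ℝ) ≤ ((k:ℝ) / (m:ℝ)) / (k:ℝ) := by
          gcongr
      _ = 1 / (m:ℝ) := by field_simp

lemma fekete_rpow (b : ℕ → ℝ) (hb0 : ∀ k, 0 ≤ b k)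
    (hsub : ∀ k l, 1 ≤ k → 1 ≤ l → b (k + l) ≤ b k * b l) :
    ∃ ρ : ℝ, Tendsto (fun k : ℕ => b k ^ ((1:ℝ) / k)) atTop (nhds ρ) := by
  set S : Set ℝ := (fun k : ℕ => b k ^ ((1:ℝ) / k)) '' {k | 1 ≤ k} with hS
  have hSne : S.Nonempty :=
    ⟨_, Set.mem_image_of_mem _ (by simp : (1:ℕ) ∈ {k | 1 ≤ k})⟩
  have hSbd : BddBelow S := ⟨0, by rintro x ⟨k, hk, rfl⟩; exact Real.rpow_nonneg (hb0 k) _⟩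
  set L := sInf S with hL
  have hL0 : 0 ≤ L := le_csInf hSne (by rintro x ⟨k, hk, rfl⟩; exact Real.rpow_nonneg (hb0 k) _)
  have hlow : ∀ k : ℕ, 1 ≤ k → L ≤ b k ^ ((1:ℝ)/k) := fun k hk => csInf_le hSbd ⟨k, hk, rfl⟩
  refine ⟨L, tendsto_order.2 ⟨?_, ?_⟩⟩
  · intro a ha
    filter_upwards [eventually_ge_atTop 1] with k hk
    exact ha.trans_le (hlow k hk)
  · intro a ha
    obtain ⟨x, hxS, hxa⟩ := exists_lt_of_csInf_lt hSne ha
    obtain ⟨m, hm1, rfl⟩ := hxS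
    have hm1 : 1 ≤ m := hm1
    have hm0 : 0 < m := hm1
    have ha0 : 0 < a := lt_of_le_of_lt hL0 ha
    by_cases hbm : b m = 0
    · filter_upwards [eventually_ge_atTop (m + 1)] with k hk
      have hk0 : b k = 0 := by
        have h2 := hsub m (k - m) hm1 (by omega : 1 ≤ k - m)
        rw [show m + (k - m) = k by omega, hbm, zero_mul] at h2
        exact le_antisymm h2 (hb0 k)
      have hkr : (1:ℝ) ≤ (k:ℝ) := by exact_mod_cast (by omega : 1 ≤ k)
      rw [hk0, Real.zero_rpow (by positivity)]
      exact ha0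
    · have hbm' : 0 < b m := lt_of_le_of_ne (hb0 m) (Ne.symm hbm)
      set C : ℝ := 1 + ∑ r ∈ Finset.range m, b r with hC
      have hsumnn : 0 ≤ ∑ r ∈ Finset.range m, b r := Finset.sum_nonneg fun r _ => hb0 r
      have hC1 : (1:ℝ) ≤ C := le_add_of_nonneg_right hsumnn
      have hC0 : (0:ℝ) < C := lt_of_lt_of_le one_pos hC1
      have hCr : ∀ r, r < m → b r ≤ C := by
        intro r hr
        have h1 : b r ≤ ∑ r ∈ Finset.range m, b r :=
          Finset.single_le_sum (fun i _ => hb0 i) (Finset.mem_range.2 hr)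
        linarith
      have hpow : ∀ q, 1 ≤ q → b (m * q) ≤ b m ^ q := by
        intro q hq
        induction q with
        | zero => omega
        | succ q ih =>
          rcases Nat.eq_or_lt_of_le hq with h | h
          · simp [← h]
          · have hq1 : 1 ≤ q := by omega
            have : b (m * (q + 1)) ≤ b (m * q) * b m := by
              have : m * (q + 1) = m * q + m := by ring
              rw [this]; exact hsub _ m (Nat.mul_pos (by omega) (by omega)) hm1
            calc b (m * (q+1)) ≤ b (m * q) * b m := this
              _ ≤ b m ^ q * b m := mul_le_mul_of_nonneg_right (ih hq1) (hb0 m)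
              _ = b m ^ (q+1) := by ring
      have hbound : ∀ k, m ≤ k → b k ≤ b m ^ (k / m) * C := by
        intro k hk
        have hq1 : 1 ≤ k / m := (Nat.one_le_div_iff hm0).2 hk
        have hqm : 1 ≤ m * (k / m) := by
          calc 1 ≤ m := hm1
            _ ≤ m * (k/m) := Nat.le_mul_of_pos_right m hq1
        have hdm := Nat.div_add_mod k m
        rcases Nat.eq_zero_or_pos (k % m) with hr | hr
        · have hk' : k = m * (k / m) := by omega
          calc b k = b (m * (k/m)) := by rw [← hk']
            _ ≤ b m ^ (k/m) := hpow _ hq1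
            _ ≤ b m ^ (k/m) * C := le_mul_of_one_le_right (pow_nonneg (hb0 m) _) hC1
        · have hk' : k = m * (k / m) + k % m := by omega
          calc b k = b (m * (k/m) + k % m) := by rw [← hk']
            _ ≤ b (m * (k/m)) * b (k % m) := hsub _ _ hqm hr
            _ ≤ b m ^ (k/m) * C :=
              mul_le_mul (hpow _ hq1) (hCr _ (Nat.mod_lt k hm0)) (hb0 _) (pow_nonneg (hb0 m) _)
      have hmaj : Tendsto (fun k : ℕ => (b m ^ (k / m) * C) ^ ((1:ℝ)/k)) atTop
          (nhds (b m ^ ((1:ℝ)/(m:ℝ)))) := by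
        have heq : ∀ᶠ k : ℕ in atTop, (b m ^ (k / m) * C) ^ ((1:ℝ)/k)
            = Real.exp ((((k / m : ℕ):ℝ)/(k:ℝ)) * Real.log (b m) + (1/(k:ℝ)) * Real.log C) := by
          filter_upwards [eventually_ge_atTop 1] with k hk
          have hpos : 0 < b m ^ (k / m) * C := by positivity
          rw [Real.rpow_def_of_pos hpos, Real.log_mul (by positivity) (ne_of_gt hC0),
            Real.log_pow]
          congr 1
          ring
        have htend : Tendsto (fun k : ℕ =>
            (((k / m : ℕ):ℝ)/(k:ℝ)) * Real.log (b m) + (1/(k:ℝ)) * Real.log C) atTop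
            (nhds ((1/(m:ℝ)) * Real.log (b m) + 0 * Real.log C)) := by
          exact ((nat_div_cast_tendsto m hm1).mul_const _).add
            (tendsto_one_div_atTop_nhds_zero_nat.mul_const _)
        have := (Real.continuous_exp.tendsto _).comp htend
        rw [show ((1/(m:ℝ)) * Real.log (b m) + 0 * Real.log C)
            = (1/(m:ℝ)) * Real.log (b m) by ring] at this
        have hval : Real.exp ((1/(m:ℝ)) * Real.log (b m)) = b m ^ ((1:ℝ)/(m:ℝ)) := by
          rw [Real.rpow_def_of_pos hbm', mul_comm]
        rw [hval] at this
        exact Tendsto.congr' (Filter.EventuallyEq.symm heq) this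
      have hev : ∀ᶠ k : ℕ in atTop, (b m ^ (k / m) * C) ^ ((1:ℝ)/k) < a :=
        hmaj.eventually_lt_const hxa
      filter_upwards [hev, eventually_ge_atTop m, eventually_ge_atTop 1] with k h1 h2 h3
      have hck : (0:ℝ) ≤ 1/(k:ℝ) := by positivity
      calc b k ^ ((1:ℝ)/k) ≤ (b m ^ (k/m) * C) ^ ((1:ℝ)/k) :=
            Real.rpow_le_rpow (hb0 k) (hbound k h2) hck
        _ < a := h1

/-- for matrices `A_1,…,A_m ∈ ℝ^{n×n}` and a strongly connected labeled graph
`G(V,E)`, the limit `lim_{k→∞} max_{s ∈ G_k} ‖A_s‖^{1/k}` defining the constrained joint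
spectral radius exists. -/
theorem cjsr_limit_exists {m n : ℕ} (A : Fin m → Matrix (Fin n) (Fin n) ℝ)
    {V : Type*} [Fintype V] [Nonempty V] (E : Finset (V × V × Fin m))
    (hSC : StronglyConnected E) :
    ∃ ρ : ℝ, Tendsto
      (fun k : ℕ => maxOver (pathSet E k) (fun s => frob (prodA A (labels s)) ^ ((1:ℝ)/k)))
      atTop (nhds ρ) := by
  classical
  set b : ℕ → ℝ := fun k => maxOver (pathSet E k) (fun s => frob (prodA A (labels s))) with hbdef
  have hne : ∀ k, (pathSet E k).Nonempty := pathSet_nonempty hSC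
  have hb0 : ∀ k, 0 ≤ b k := by
    intro k
    obtain ⟨s, hs⟩ := hne k
    simp only [hbdef]
    exact le_trans (frob_nonneg _) (le_maxOver hs (fun s => frob (prodA A (labels s))))
  have hsub : ∀ k l, 1 ≤ k → 1 ≤ l → b (k + l) ≤ b k * b l := by
    intro k l hk hl
    obtain ⟨s, hs, hval⟩ := maxOver_exists (hne (k + l)) (fun s => frob (prodA A (labels s)))
    have hmem := mem_pathSet.1 hs
    have hs₁ : (fun i : Fin k => s (Fin.castAdd l i)) ∈ pathSet E k :=
      mem_pathSet.2 ⟨fun i => hmem.1 _, fun i h => hmem.2 i (by omega)⟩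
    have hs₂ : (fun i : Fin l => s (Fin.natAdd k i)) ∈ pathSet E l :=
      mem_pathSet.2 ⟨fun i => hmem.1 _, fun i h => hmem.2 (k + i) (by omega)⟩
    have hsplit : prodA A (labels s)
        = prodA A (labels (fun i : Fin l => s (Fin.natAdd k i)))
          * prodA A (labels (fun i : Fin k => s (Fin.castAdd l i))) :=
      prodA_split A (labels s)
    simp only [hbdef]
    rw [hval]
    calc frob (prodA A (labels s))
        ≤ frob (prodA A (labels (fun i : Fin l => s (Fin.natAdd k i))))
          * frob (prodA A (labels (fun i : Fin k => s (Fin.castAdd l i)))) := by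
          rw [hsplit]; exact frob_mul_le _ _
      _ ≤ maxOver (pathSet E l) (fun s => frob (prodA A (labels s)))
          * maxOver (pathSet E k) (fun s => frob (prodA A (labels s))) :=
          mul_le_mul (le_maxOver hs₂ (fun s => frob (prodA A (labels s)))) (le_maxOver hs₁ (fun s => frob (prodA A (labels s)))) (frob_nonneg _)
            (by simpa only [hbdef] using hb0 l)
      _ = _ := mul_comm _ _
  obtain ⟨ρ, hρ⟩ := fekete_rpow b hb0 hsub
  refine ⟨ρ, Tendsto.congr' ?_ hρ⟩
  filter_upwards [eventually_ge_atTop 1] with k hk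
  have hkr : (1:ℝ) ≤ (k:ℝ) := by exact_mod_cast hk
  simp only [hbdef]
  exact (maxOver_rpow (hne k) (fun s => frob (prodA A (labels s)))
    (fun s => frob_nonneg _) (by positivity)).symm
end

section
/- If there exist strictly positive homogeneous polynomials p_v of degree 2d, one per node v of G, and γ̄ > 0 such that p_v(A_σ x) ≤ γ̄^{2d} p_u(x) for all x ∈ R^n and all edges (u,v,σ) ∈ E, then the constrained joint spectral radius satisfies ρ(G,A) ≤ γ̄. -/
open scoped Classical
open Filter MvPolynomial

/-- Evaluation of a homogeneous polynomial scales like the degree. -/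
lemma eval_smul_of_isHomogeneous {n N : ℕ} {p : MvPolynomial (Fin n) ℝ}
    (h : p.IsHomogeneous N) (c : ℝ) (x : Fin n → ℝ) :
    MvPolynomial.eval (c • x) p = c ^ N * MvPolynomial.eval x p := by
  rw [MvPolynomial.eval_eq', MvPolynomial.eval_eq', Finset.mul_sum]
  refine Finset.sum_congr rfl fun e he => ?_
  have hdeg : ∑ i, e i = N := by
    have h1 := h (MvPolynomial.mem_support_iff.mp he)
    rw [← (show Finsupp.degree e = Finsupp.weight 1 e by
      exact DFunLike.congr_fun Finsupp.degree_eq_weight_one e)] at h1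
    rw [← h1, Finsupp.degree_apply]
    exact (Finset.sum_subset (Finset.subset_univ _)
      (fun i _ hi => Finsupp.notMem_support_iff.mp hi)).symm
  have hprod : ∏ i, (c • x) i ^ e i = c ^ N * ∏ i, x i ^ e i := by
    simp only [Pi.smul_apply, smul_eq_mul, mul_pow, Finset.prod_mul_distrib,
      Finset.prod_pow_eq_pow_sum, hdeg]
  rw [hprod]; ring

lemma eval_zero_of_isHomogeneous {n N : ℕ} (hN : N ≠ 0) {p : MvPolynomial (Fin n) ℝ}
    (h : p.IsHomogeneous N) : MvPolynomial.eval (0 : Fin n → ℝ) p = 0 := by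
  have h1 := eval_smul_of_isHomogeneous h 0 0
  rwa [smul_zero, zero_pow hN, zero_mul] at h1

/-- Telescoping the Lyapunov inequality along a path. -/
lemma telescope_lyap {m n : ℕ} (A : Fin m → Matrix (Fin n) (Fin n) ℝ)
    {V : Type*} [Fintype V] (E : Finset (V × V × Fin m))
    (d : ℕ) (P : V → MvPolynomial (Fin n) ℝ) (γ : ℝ) (hγ : 0 < γ)
    (hlyap : ∀ e ∈ E, ∀ x : Fin n → ℝ,
      MvPolynomial.eval ((A e.2.2).mulVec x) (P e.2.1)
        ≤ γ ^ (2 * d) * MvPolynomial.eval x (P e.1)) :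
    ∀ (k : ℕ) (s : Fin (k+1) → V × V × Fin m), s ∈ pathSet E (k+1) →
      ∀ x : Fin n → ℝ,
        MvPolynomial.eval ((prodA A (labels s)).mulVec x) (P (s (Fin.last k)).2.1)
          ≤ γ ^ (2*d*(k+1)) * MvPolynomial.eval x (P (s 0).1) := by
  intro k
  induction k with
  | zero =>
    intro s hs x
    simp only [pathSet, Finset.mem_filter] at hs
    have hsE : s 0 ∈ E := hs.2.1 0
    have hprod : prodA A (labels s) = A ((s 0).2.2) := by
      simp [prodA, labels, List.ofFn_succ]
    rw [hprod]
    have hlast : (Fin.last 0 : Fin 1) = 0 := rfl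
    rw [hlast]
    simpa [mul_one] using hlyap (s 0) hsE x
  | succ k ih =>
    intro s hs x
    simp only [pathSet, Finset.mem_filter] at hs
    obtain ⟨-, hsE, hadj⟩ := hs
    set s' : Fin (k+1) → V × V × Fin m := fun i => s i.succ with hs'def
    have hs' : s' ∈ pathSet E (k+1) := by
      simp only [pathSet, Finset.mem_filter]
      refine ⟨Finset.mem_univ _, fun i => hsE _, fun i h => ?_⟩
      have h2 : (i+1) + 1 < k + 2 := Nat.succ_lt_succ h
      have h3 := hadj (i+1) h2
      simpa [hs'def, Fin.succ_mk] using h3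
    have hprod : prodA A (labels s) = prodA A (labels s') * A ((s 0).2.2) := by
      rw [prodA, prodA,
        show List.ofFn (labels s) = labels s 0 :: List.ofFn (fun i => labels s i.succ)
          from List.ofFn_succ,
        List.reverse_cons, List.map_append, List.prod_append]
      simp [labels, hs'def]
    have hy := hlyap (s 0) (hsE 0) x
    have h0 : (s 0).2.1 = (s (Fin.succ 0)).1 := by
      have h3 := hadj 0 (Nat.succ_lt_succ (Nat.succ_pos k))
      simpa using h3
    have hih := ih s' hs' ((A ((s 0).2.2)).mulVec x)
    have hlasts : s' (Fin.last k) = s (Fin.last (k+1)) := by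
      rw [hs'def]; simp [Fin.succ_last]
    have hs'0 : s' 0 = s (Fin.succ 0) := rfl
    rw [hlasts, hs'0, Matrix.mulVec_mulVec, ← hprod] at hih
    refine le_trans hih ?_
    rw [← h0]
    calc γ^(2*d*(k+1)) * MvPolynomial.eval ((A ((s 0).2.2)).mulVec x) (P (s 0).2.1)
        ≤ γ^(2*d*(k+1)) * (γ^(2*d) * MvPolynomial.eval x (P (s 0).1)) :=
          mul_le_mul_of_nonneg_left hy (by positivity)
      _ = γ^(2*d*(k+1+1)) * MvPolynomial.eval x (P (s 0).1) := by
          rw [← mul_assoc, ← pow_add, show 2*d*(k+1)+2*d = 2*d*(k+1+1) by ring]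

/-- if there exist strictly positive homogeneous polynomials `p_v` of degree
`2d` (one per node) and `γ̄ > 0` with `p_v(A_σ x) ≤ γ̄^{2d} p_u(x)` for every edge
`(u,v,σ) ∈ E` and every `x`, then `ρ(G,A) ≤ γ̄`. -/
theorem lyapunov_cjsr_upper_bound {m n : ℕ} (A : Fin m → Matrix (Fin n) (Fin n) ℝ)
    {V : Type*} [Fintype V] (E : Finset (V × V × Fin m)) (hSC : StronglyConnected E)
    (d : ℕ) (hd : 0 < d) (P : V → MvPolynomial (Fin n) ℝ)
    (hhom : ∀ v, (P v).IsHomogeneous (2 * d))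
    (hpos : ∀ v (x : Fin n → ℝ), x ≠ 0 → 0 < MvPolynomial.eval x (P v))
    (γ : ℝ) (hγ : 0 < γ)
    (hlyap : ∀ e ∈ E, ∀ x : Fin n → ℝ,
      MvPolynomial.eval ((A e.2.2).mulVec x) (P e.2.1)
        ≤ γ ^ (2 * d) * MvPolynomial.eval x (P e.1))
    (ρ : ℝ)
    (hρ : Tendsto (fun k : ℕ =>
        maxOver (pathSet E k) (fun s => frob (prodA A (labels s)) ^ ((1:ℝ)/k)))
      atTop (nhds ρ)) :
    ρ ≤ γ := by
  -- reduce to a uniform geometric bound on the Frobenius norms of products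
  suffices h : ∃ C : ℝ, 1 ≤ C ∧ ∀ k : ℕ, ∀ s ∈ pathSet E (k+1),
      frob (prodA A (labels s)) ≤ C * γ ^ (k+1) by
    obtain ⟨C, hC1, hC⟩ := h
    have hCpos : (0:ℝ) < C := lt_of_lt_of_le one_pos hC1
    have h0 : Tendsto (fun k : ℕ => Real.log C * (1/(k:ℝ))) atTop (nhds 0) := by
      simpa using tendsto_one_div_atTop_nhds_zero_nat.const_mul (Real.log C)
    have h1 : Tendsto (fun k : ℕ => C ^ ((1:ℝ)/(k:ℝ))) atTop (nhds 1) := by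
      have h2 := (Real.continuous_exp.tendsto 0).comp h0
      rw [Real.exp_zero] at h2
      exact h2.congr fun k => (Real.rpow_def_of_pos hCpos _).symm
    have hg : Tendsto (fun k : ℕ => C ^ ((1:ℝ)/(k:ℝ)) * γ) atTop (nhds γ) := by
      simpa using h1.mul_const γ
    refine le_of_tendsto_of_tendsto hρ hg ?_
    filter_upwards [eventually_ge_atTop 1] with k hk
    obtain ⟨k', rfl⟩ : ∃ k', k = k' + 1 := ⟨k - 1, (Nat.succ_pred_eq_of_pos hk).symm⟩
    rw [maxOver]
    refine Real.sSup_le ?_ (by positivity)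
    rintro y ⟨s, hs, rfl⟩
    have hfrob0 : 0 ≤ frob (prodA A (labels s)) := Real.sqrt_nonneg _
    have hb := hC k' s hs
    calc frob (prodA A (labels s)) ^ ((1:ℝ)/((k'+1 : ℕ):ℝ))
        ≤ (C * γ ^ (k'+1)) ^ ((1:ℝ)/((k'+1 : ℕ):ℝ)) :=
          Real.rpow_le_rpow hfrob0 hb (by positivity)
      _ = C ^ ((1:ℝ)/((k'+1 : ℕ):ℝ)) * γ := by
          rw [Real.mul_rpow hCpos.le (by positivity), one_div,
            Real.pow_rpow_inv_natCast hγ.le (Nat.succ_ne_zero k')]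
  -- now construct the constant C
  rcases Nat.eq_zero_or_pos n with hn | hn
  · refine ⟨1, le_refl 1, fun k s hs => ?_⟩
    subst hn
    have h0 : frob (prodA A (labels s)) = 0 := by simp [frob]
    rw [h0]; positivity
  cases isEmpty_or_nonempty V with
  | inl hV =>
    exact ⟨1, le_rfl, fun k s _ => (hV.false (s 0).1).elim⟩
  | inr hV =>
    have hcont : ∀ v, Continuous fun x : Fin n → ℝ => MvPolynomial.eval x (P v) :=
      fun v => MvPolynomial.continuous_eval _
    have hsph : (Metric.sphere (0 : Fin n → ℝ) 1).Nonempty := by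
      refine ⟨Pi.single ⟨0, hn⟩ 1, ?_⟩
      simp [mem_sphere_zero_iff_norm, Pi.norm_single]
    have hmin : ∀ v : V, ∃ c : ℝ, 0 < c ∧
        ∀ y ∈ Metric.sphere (0 : Fin n → ℝ) 1, c ≤ MvPolynomial.eval y (P v) := by
      intro v
      obtain ⟨y0, hy0, hy0min⟩ := (isCompact_sphere (0 : Fin n → ℝ) 1).exists_isMinOn hsph
        ((hcont v).continuousOn)
      refine ⟨MvPolynomial.eval y0 (P v), hpos v y0 ?_, fun y hy => hy0min hy⟩
      intro h0
      rw [h0, mem_sphere_zero_iff_norm, norm_zero] at hy0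
      exact one_ne_zero hy0.symm
    choose c hcpos hcmin using hmin
    obtain ⟨v0, -, hv0⟩ := Finset.exists_min_image Finset.univ c
      ⟨Classical.arbitrary V, Finset.mem_univ _⟩
    set c1 := c v0 with hc1def
    have hc1pos : 0 < c1 := hcpos v0
    have hlower : ∀ v, ∀ y : Fin n → ℝ, c1 * ‖y‖ ^ (2*d) ≤ MvPolynomial.eval y (P v) := by
      intro v y
      by_cases h0 : y = 0
      · subst h0
        rw [eval_zero_of_isHomogeneous (by omega) (hhom v), norm_zero,
          zero_pow (by omega : 2*d ≠ 0), mul_zero]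
      · have hu : ‖y‖⁻¹ • y ∈ Metric.sphere (0 : Fin n → ℝ) 1 := by
          rw [mem_sphere_zero_iff_norm]
          exact norm_smul_inv_norm h0
        have hy : y = ‖y‖ • (‖y‖⁻¹ • y) := by
          rw [smul_smul, mul_inv_cancel₀ (norm_ne_zero_iff.mpr h0), one_smul]
        have heval : MvPolynomial.eval y (P v)
            = ‖y‖ ^ (2*d) * MvPolynomial.eval (‖y‖⁻¹ • y) (P v) := by
          conv_lhs => rw [hy]
          exact eval_smul_of_isHomogeneous (hhom v) _ _
        have hle : c1 ≤ MvPolynomial.eval (‖y‖⁻¹ • y) (P v) :=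
          le_trans (hv0 v (Finset.mem_univ v)) (hcmin v _ hu)
        rw [heval, mul_comm]
        exact mul_le_mul_of_nonneg_left hle (by positivity)
    obtain ⟨c2, hc2pos, hc2b⟩ :
        ∃ c2 : ℝ, 0 < c2 ∧ ∀ v (j : Fin n),
          MvPolynomial.eval (Pi.single j (1:ℝ)) (P v) ≤ c2 := by
      obtain ⟨⟨v1, j1⟩, -, hmax⟩ := Finset.exists_max_image (Finset.univ : Finset (V × Fin n))
        (fun q => MvPolynomial.eval (Pi.single q.2 (1:ℝ)) (P q.1))
        ⟨(Classical.arbitrary V, ⟨0, hn⟩), Finset.mem_univ _⟩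
      refine ⟨_, hpos v1 (Pi.single j1 1) ?_, fun v j => hmax (v, j) (Finset.mem_univ _)⟩
      intro h
      have h2 := congrFun h j1
      simp at h2
    set K := c2 / c1 with hKdef
    have hKpos : 0 < K := div_pos hc2pos hc1pos
    set Kr := K ^ (((2*d : ℕ) : ℝ))⁻¹ with hKrdef
    have hKrpos : 0 < Kr := Real.rpow_pos_of_pos hKpos _
    have hKrpow : Kr ^ (2*d) = K := Real.rpow_inv_natCast_pow hKpos.le (by omega)
    refine ⟨max 1 ((n:ℝ) * Kr), le_max_left _ _, fun k s hs => ?_⟩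
    set M := prodA A (labels s) with hM
    have hEb : ∀ i j, |M i j| ≤ Kr * γ ^ (k+1) := by
      intro i j
      set y := M.mulVec (Pi.single j (1:ℝ)) with hy
      have htel := telescope_lyap A E d P γ hγ hlyap k s hs (Pi.single j (1:ℝ))
      have h1 : c1 * ‖y‖ ^ (2*d) ≤ γ ^ (2*d*(k+1)) * c2 :=
        le_trans (hlower _ y) (le_trans htel
          (mul_le_mul_of_nonneg_left (hc2b _ j) (by positivity)))
      have h2 : ‖y‖ ^ (2*d) ≤ (Kr * γ ^ (k+1)) ^ (2*d) := by
        have hrhs : (Kr * γ ^ (k+1)) ^ (2*d) = K * γ ^ (2*d*(k+1)) := by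
          rw [mul_pow, hKrpow, ← pow_mul]
          congr 2
          ring
        rw [hrhs, hKdef]
        rw [show c2 / c1 * γ ^ (2*d*(k+1)) = (γ ^ (2*d*(k+1)) * c2) / c1 by
          field_simp]
        rw [le_div_iff₀ hc1pos]
        linarith [h1]
      have h3 : ‖y‖ ≤ Kr * γ ^ (k+1) :=
        (pow_le_pow_iff_left₀ (norm_nonneg y) (by positivity) (by omega)).mp h2
      calc |M i j| = ‖y i‖ := by rw [hy]; simp [Matrix.mulVec_single]
        _ ≤ ‖y‖ := norm_le_pi_norm y i
        _ ≤ _ := h3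
    have hfb : frob M ≤ (n:ℝ) * Kr * γ ^ (k+1) := by
      have hsum : ∑ i, ∑ j, (M i j)^2
          ≤ ∑ _i : Fin n, ∑ _j : Fin n, (Kr * γ ^ (k+1))^2 := by
        refine Finset.sum_le_sum fun i _ => Finset.sum_le_sum fun j _ => ?_
        calc (M i j)^2 = |M i j|^2 := (sq_abs _).symm
          _ ≤ (Kr * γ ^ (k+1))^2 := pow_le_pow_left₀ (abs_nonneg _) (hEb i j) 2
      have hle : frob M ≤ Real.sqrt (∑ _i : Fin n, ∑ _j : Fin n, (Kr * γ ^ (k+1))^2) :=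
        Real.sqrt_le_sqrt hsum
      refine le_trans hle ?_
      rw [Finset.sum_const, Finset.sum_const, Finset.card_univ, Fintype.card_fin,
        nsmul_eq_mul, nsmul_eq_mul,
        show (n:ℝ) * ((n:ℝ) * (Kr * γ ^ (k+1))^2) = ((n:ℝ) * Kr * γ ^ (k+1))^2 by ring,
        Real.sqrt_sq (by positivity)]
    refine le_trans hfb ?_
    exact mul_le_mul_of_nonneg_right (le_max_right 1 _) (by positivity)
end

section
/- Fix τ > 0 and homogeneous degree-2d polynomials q_v in the interior of the SOS cone. Define the iteration p_{v,0} = 0 and p_{v,k+1}(x) = q_v(x) + (1/τ) Σ_{(u,v,σ)∈E} p_{u,k}(A_σ x). If the iteration converges (coefficient-wise) to polynomials p_{v,∞}, then each p_{v,∞} is a sum of squares, each p_{v,∞} lies in the interior of the SOS cone, and for every edge (u,v,σ) ∈ E the polynomial τ·p_{v,∞}(x) − p_{u,∞}(A_σ x) is a sum of squares. -/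
open scoped Classical
open Filter MvPolynomial

/-- A polynomial is a sum of squares. -/
def IsSOS {n : ℕ} (p : MvPolynomial (Fin n) ℝ) : Prop :=
  ∃ s : Multiset (MvPolynomial (Fin n) ℝ), p = (s.map (fun q => q ^ 2)).sum

/-- Membership in the interior of the SOS cone (within homogeneous forms of degree `2d`):
`p - ε‖x‖^{2d}` is SOS for some `ε > 0`, where `‖x‖^{2d} = (Σᵢ xᵢ²)^d` is an interior
point of the cone. -/
def InIntSOS {n : ℕ} (d : ℕ) (p : MvPolynomial (Fin n) ℝ) : Prop :=
  ∃ ε : ℝ, 0 < ε ∧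
    IsSOS (p - MvPolynomial.C ε * (∑ i, MvPolynomial.X i ^ 2) ^ d)

/-- Substitution `p(x) ↦ p(Bx)`. -/
noncomputable def substMat {n : ℕ} (B : Matrix (Fin n) (Fin n) ℝ)
    (p : MvPolynomial (Fin n) ℝ) : MvPolynomial (Fin n) ℝ :=
  MvPolynomial.aeval (fun i => ∑ j, MvPolynomial.C (B i j) * MvPolynomial.X j) p

section SOSAux

open MvPolynomial

variable {n : ℕ}

lemma isSOS_zero : IsSOS (0 : MvPolynomial (Fin n) ℝ) := ⟨0, by simp⟩

lemma isSOS_one : IsSOS (1 : MvPolynomial (Fin n) ℝ) := ⟨{1}, by simp⟩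

lemma isSOS_sq (p : MvPolynomial (Fin n) ℝ) : IsSOS (p ^ 2) := ⟨{p}, by simp⟩

lemma IsSOS.add {p q : MvPolynomial (Fin n) ℝ} (hp : IsSOS p) (hq : IsSOS q) :
    IsSOS (p + q) := by
  obtain ⟨s, rfl⟩ := hp
  obtain ⟨t, rfl⟩ := hq
  exact ⟨s + t, by rw [Multiset.map_add, Multiset.sum_add]⟩

lemma IsSOS.finsetSum {ι : Type*} {s : Finset ι} {f : ι → MvPolynomial (Fin n) ℝ}
    (h : ∀ i ∈ s, IsSOS (f i)) : IsSOS (∑ i ∈ s, f i) :=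
  Finset.sum_induction f IsSOS (fun _ _ ha hb => ha.add hb) isSOS_zero h

lemma isSOS_sq_mul {p q : MvPolynomial (Fin n) ℝ} (hq : IsSOS q) : IsSOS (p ^ 2 * q) := by
  obtain ⟨t, rfl⟩ := hq
  refine ⟨t.map (fun b => p * b), ?_⟩
  rw [Multiset.map_map]
  simp only [Function.comp, mul_pow]
  rw [Multiset.sum_map_mul_left]

lemma IsSOS.mul {p q : MvPolynomial (Fin n) ℝ} (hp : IsSOS p) (hq : IsSOS q) :
    IsSOS (p * q) := by
  obtain ⟨s, rfl⟩ := hp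
  induction s using Multiset.induction_on with
  | empty => simpa using isSOS_zero
  | cons a t ih =>
    rw [Multiset.map_cons, Multiset.sum_cons, add_mul]
    exact (isSOS_sq_mul hq).add ih

lemma isSOS_C_mul {c : ℝ} (hc : 0 ≤ c) {p : MvPolynomial (Fin n) ℝ} (hp : IsSOS p) :
    IsSOS (MvPolynomial.C c * p) := by
  have h : (MvPolynomial.C c : MvPolynomial (Fin n) ℝ) = (MvPolynomial.C (Real.sqrt c)) ^ 2 := by
    rw [← map_pow, Real.sq_sqrt hc]
  rw [h]
  exact isSOS_sq_mul hp

lemma isSOS_S : IsSOS (∑ i, (X i : MvPolynomial (Fin n) ℝ) ^ 2) :=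
  IsSOS.finsetSum (fun i _ => isSOS_sq _)

lemma isSOS_S_pow (d : ℕ) : IsSOS ((∑ i, (X i : MvPolynomial (Fin n) ℝ) ^ 2) ^ d) := by
  induction d with
  | zero => simpa using isSOS_one
  | succ d ih => rw [pow_succ]; exact ih.mul isSOS_S

lemma isSOS_substMat {B : Matrix (Fin n) (Fin n) ℝ} {p : MvPolynomial (Fin n) ℝ}
    (hp : IsSOS p) : IsSOS (substMat B p) := by
  obtain ⟨s, rfl⟩ := hp
  refine ⟨s.map (substMat B), ?_⟩
  rw [substMat, map_multiset_sum, Multiset.map_map, Multiset.map_map]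
  congr 1
  refine Multiset.map_congr rfl fun x _ => ?_
  simp [Function.comp, map_pow, substMat]

lemma degree_univ (f : Fin n →₀ ℕ) : f.degree = ∑ i, f i := by
  rw [Finsupp.degree]
  exact Finset.sum_subset (Finset.subset_univ _)
    (fun i _ h => Finsupp.notMem_support_iff.mp h)

lemma degree_add' (f g : Fin n →₀ ℕ) : (f + g).degree = f.degree + g.degree := by
  simp [degree_univ, Finset.sum_add_distrib]

lemma degree_single' (i : Fin n) (k : ℕ) : (Finsupp.single i k).degree = k := by
  simp [degree_univ, Finsupp.single_apply]

lemma exists_le_degree_eq : ∀ (t : ℕ) (f : Fin n →₀ ℕ), t ≤ f.degree →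
    ∃ g, g ≤ f ∧ g.degree = t := by
  intro t
  induction t with
  | zero => exact fun f _ => ⟨0, zero_le, map_zero _⟩
  | succ t ih =>
    intro f hf
    obtain ⟨g, hg, hdeg⟩ := ih f (le_trans (Nat.le_succ t) hf)
    have hlt : ∃ i, g i < f i := by
      by_contra hcon
      push_neg at hcon
      have : f = g := le_antisymm (Finsupp.le_def.mpr hcon) hg
      rw [this, hdeg] at hf
      omega
    obtain ⟨i, hi⟩ := hlt
    refine ⟨g + Finsupp.single i 1, ?_, by rw [degree_add', hdeg, degree_single']⟩
    rw [Finsupp.le_def]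
    intro j
    rcases eq_or_ne j i with rfl | hne'
    · rw [Finsupp.add_apply, Finsupp.single_eq_same]
      omega
    · rw [Finsupp.add_apply, Finsupp.single_eq_of_ne' (Ne.symm hne'), add_zero]
      exact hg j

lemma isSOS_S_pow_sub_sq : ∀ (d : ℕ) (β : Fin n →₀ ℕ), β.degree = d →
    IsSOS ((∑ i, (X i : MvPolynomial (Fin n) ℝ) ^ 2) ^ d - (monomial β 1) ^ 2) := by
  intro d
  induction d with
  | zero =>
    intro β hβ
    rw [Finsupp.degree_eq_zero_iff] at hβ
    subst hβ
    have : ((∑ i, (X i : MvPolynomial (Fin n) ℝ) ^ 2) ^ 0 - (monomial 0 1) ^ 2) = 0 := by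
      rw [monomial_zero', map_one, pow_zero, one_pow, sub_self]
    rw [this]
    exact isSOS_zero
  | succ d ih =>
    intro β hβ
    have hex : ∃ i, β i ≠ 0 := by
      by_contra h
      push_neg at h
      have hz : β = 0 := Finsupp.ext fun i => h i
      rw [hz, map_zero] at hβ
      omega
    obtain ⟨i, hi⟩ := hex
    have hle : Finsupp.single i 1 ≤ β := by
      rw [Finsupp.single_le_iff]
      omega
    set β' := β - Finsupp.single i 1 with hβ'
    have hadd : β' + Finsupp.single i 1 = β := tsub_add_cancel_of_le hle
    have hdeg' : β'.degree = d := by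
      have h2 := degree_add' β' (Finsupp.single i 1)
      rw [hadd, hβ, degree_single'] at h2
      omega
    have hmon : (monomial β (1 : ℝ)) = monomial β' 1 * X i := by
      rw [X, monomial_mul, mul_one, hadd]
    have hSi : IsSOS ((∑ j, (X j : MvPolynomial (Fin n) ℝ) ^ 2) - X i ^ 2) := by
      have h3 : (∑ j, (X j : MvPolynomial (Fin n) ℝ) ^ 2) - X i ^ 2
          = ∑ j ∈ Finset.univ.erase i, (X j : MvPolynomial (Fin n) ℝ) ^ 2 := by
        rw [← Finset.add_sum_erase _ _ (Finset.mem_univ i)]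
        ring
      rw [h3]
      exact IsSOS.finsetSum fun j _ => isSOS_sq _
    have key : (∑ j, (X j : MvPolynomial (Fin n) ℝ) ^ 2) ^ (d + 1) - (monomial β 1) ^ 2
        = (∑ j, (X j : MvPolynomial (Fin n) ℝ) ^ 2)
            * ((∑ j, (X j : MvPolynomial (Fin n) ℝ) ^ 2) ^ d - (monomial β' 1) ^ 2)
          + (monomial β' 1) ^ 2 * ((∑ j, (X j : MvPolynomial (Fin n) ℝ) ^ 2) - X i ^ 2) := by
      rw [hmon]
      ring
    rw [key]
    exact (isSOS_S.mul (ih β' hdeg')).add (isSOS_sq_mul hSi)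

lemma isSOS_C_S_add_monomial {d : ℕ} {α : Fin n →₀ ℕ} (hα : α.degree = 2 * d) {c ε : ℝ}
    (hc : |c| ≤ ε) :
    IsSOS (MvPolynomial.C ε * (∑ i, (X i : MvPolynomial (Fin n) ℝ) ^ 2) ^ d + monomial α c) := by
  have hc0 : 0 ≤ |c| := abs_nonneg c
  obtain ⟨β, hβle, hβdeg⟩ := exists_le_degree_eq d α (by omega)
  set γ := α - β with hγdef
  have hadd : β + γ = α := add_tsub_cancel_of_le hβle
  have hγdeg : γ.degree = d := by
    have h2 := degree_add' β γ
    rw [hadd, hα, hβdeg] at h2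
    omega
  set s : ℝ := if 0 ≤ c then 1 else -1 with hs
  have hsc : s * |c| = c := by
    rcases le_or_gt 0 c with h | h
    · rw [hs, if_pos h, abs_of_nonneg h, one_mul]
    · rw [hs, if_neg (not_le.mpr h), abs_of_neg h]
      ring
  have hs2 : s ^ 2 = 1 := by
    rcases le_or_gt 0 c with h | h
    · rw [hs, if_pos h]; norm_num
    · rw [hs, if_neg (not_le.mpr h)]; norm_num
  set S := (∑ i, (X i : MvPolynomial (Fin n) ℝ) ^ 2) with hS
  set Xβ := (monomial β (1 : ℝ)) with hXβ
  set Xγ := (monomial γ (1 : ℝ)) with hXγ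
  have hmono : (monomial α c : MvPolynomial (Fin n) ℝ) = MvPolynomial.C c * (Xβ * Xγ) := by
    rw [hXβ, hXγ, monomial_mul, mul_one, hadd, C_mul_monomial, mul_one]
  have hCs2 : (MvPolynomial.C s : MvPolynomial (Fin n) ℝ) ^ 2 = 1 := by
    rw [← map_pow, hs2, map_one]
  have hCsc : (MvPolynomial.C s : MvPolynomial (Fin n) ℝ) * MvPolynomial.C |c|
      = MvPolynomial.C c := by rw [← map_mul, hsc]
  have e1 : (MvPolynomial.C (ε/2) : MvPolynomial (Fin n) ℝ) + MvPolynomial.C (ε/2)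
      = MvPolynomial.C ε := by rw [← map_add]; norm_num
  have e2 : (MvPolynomial.C (|c|/2) : MvPolynomial (Fin n) ℝ) + MvPolynomial.C ((ε - |c|)/2)
      = MvPolynomial.C (ε/2) := by rw [← map_add]; congr 1; ring
  have e3 : (MvPolynomial.C (|c|/2) : MvPolynomial (Fin n) ℝ) + MvPolynomial.C (|c|/2)
      = MvPolynomial.C |c| := by rw [← map_add]; norm_num
  have key : MvPolynomial.C ε * S ^ d + monomial α c
      = MvPolynomial.C (ε/2) * (S ^ d - Xβ ^ 2) + MvPolynomial.C (ε/2) * (S ^ d - Xγ ^ 2)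
        + (MvPolynomial.C (|c|/2) * (Xβ + MvPolynomial.C s * Xγ) ^ 2
          + MvPolynomial.C ((ε - |c|)/2) * (Xβ ^ 2 + Xγ ^ 2)) := by
    rw [hmono]
    linear_combination (-(S ^ d)) * e1 - (Xβ ^ 2 + Xγ ^ 2) * e2
      - (MvPolynomial.C (|c|/2) * Xγ ^ 2) * hCs2 - (MvPolynomial.C s * (Xβ * Xγ)) * e3
      - (Xβ * Xγ) * hCsc
  rw [key]
  exact ((isSOS_C_mul (by linarith) (isSOS_S_pow_sub_sq d β hβdeg)).add
      (isSOS_C_mul (by linarith) (isSOS_S_pow_sub_sq d γ hγdeg))).add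
    ((isSOS_C_mul (by linarith) (isSOS_sq _)).add
      (isSOS_C_mul (by linarith) ((isSOS_sq Xβ).add (isSOS_sq Xγ))))

lemma isSOS_C_S_add_sum (d : ℕ) (c : (Fin n →₀ ℕ) → ℝ) (t : Finset (Fin n →₀ ℕ)) :
    (∀ mon ∈ t, mon.degree = 2 * d) →
    ∀ ε : ℝ, (∑ mon ∈ t, |c mon|) ≤ ε →
      IsSOS (MvPolynomial.C ε * (∑ i, (X i : MvPolynomial (Fin n) ℝ) ^ 2) ^ d
        + ∑ mon ∈ t, monomial mon (c mon)) := by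
  classical
  induction t using Finset.induction_on with
  | empty =>
    intro _ ε hε
    rw [Finset.sum_empty, add_zero]
    exact isSOS_C_mul (by simpa using hε) (isSOS_S_pow d)
  | @insert a t ha ih =>
    intro hdeg ε hε
    rw [Finset.sum_insert ha] at hε ⊢
    have hsnn : (0 : ℝ) ≤ ∑ mon ∈ t, |c mon| :=
      Finset.sum_nonneg fun _ _ => abs_nonneg _
    have eC : (MvPolynomial.C |c a| : MvPolynomial (Fin n) ℝ) + MvPolynomial.C (ε - |c a|)
        = MvPolynomial.C ε := by rw [← map_add]; congr 1; ring
    have key : MvPolynomial.C ε * (∑ i, (X i : MvPolynomial (Fin n) ℝ) ^ 2) ^ d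
          + (monomial a (c a) + ∑ mon ∈ t, monomial mon (c mon))
        = (MvPolynomial.C |c a| * (∑ i, (X i : MvPolynomial (Fin n) ℝ) ^ 2) ^ d
            + monomial a (c a))
          + (MvPolynomial.C (ε - |c a|) * (∑ i, (X i : MvPolynomial (Fin n) ℝ) ^ 2) ^ d
            + ∑ mon ∈ t, monomial mon (c mon)) := by
      linear_combination ((∑ i, (X i : MvPolynomial (Fin n) ℝ) ^ 2) ^ d) * eC.symm
    rw [key]
    exact (isSOS_C_S_add_monomial (hdeg a (Finset.mem_insert_self a t)) le_rfl).add
      (ih (fun mon hm => hdeg mon (Finset.mem_insert_of_mem hm)) (ε - |c a|) (by linarith))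

lemma isSOS_C_S_add_of_homog {d : ℕ} {p : MvPolynomial (Fin n) ℝ}
    (hp : p.IsHomogeneous (2 * d)) {ε : ℝ}
    (h : ∑ mon ∈ p.support, |MvPolynomial.coeff mon p| ≤ ε) :
    IsSOS (MvPolynomial.C ε * (∑ i, (X i : MvPolynomial (Fin n) ℝ) ^ 2) ^ d + p) := by
  have hdeg : ∀ mon ∈ p.support, mon.degree = 2 * d := by
    intro mon hmon
    by_contra hne
    exact (mem_support_iff.mp hmon) (hp.coeff_eq_zero hne)
  have h2 := isSOS_C_S_add_sum d (fun mon => MvPolynomial.coeff mon p) p.support hdeg ε h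
  rwa [support_sum_monomial_coeff] at h2

/-- The (finite) set of monomials whose exponents are all at most `2d`. -/
noncomputable def monF (n d : ℕ) : Finset (Fin n →₀ ℕ) :=
  Finset.Iic (Finsupp.equivFunOnFinite.symm fun _ => 2 * d)

lemma support_subset_monF {d : ℕ} {p : MvPolynomial (Fin n) ℝ}
    (hp : p.IsHomogeneous (2 * d)) : p.support ⊆ monF n d := by
  intro mon hmon
  rw [monF, Finset.mem_Iic, Finsupp.le_def]
  intro i
  have h1 : mon i ≤ mon.degree := Finsupp.le_degree i mon
  have h2 : mon.degree = 2 * d := by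
    by_contra hne
    exact (mem_support_iff.mp hmon) (hp.coeff_eq_zero hne)
  simpa using h1.trans_eq h2

lemma isHomogeneous_of {p : MvPolynomial (Fin n) ℝ} {m : ℕ}
    (h : ∀ mon, MvPolynomial.coeff mon p ≠ 0 → mon.degree = m) : p.IsHomogeneous m := by
  intro mon hmon
  rw [Pi.one_def, ← Finsupp.degree_eq_weight_one]
  exact h mon hmon

lemma substMat_isHomogeneous {B : Matrix (Fin n) (Fin n) ℝ} {p : MvPolynomial (Fin n) ℝ}
    {m : ℕ} (hp : p.IsHomogeneous m) : (substMat B p).IsHomogeneous m := by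
  have h := hp.aeval (fun i => ∑ j, MvPolynomial.C (B i j) * X j)
    (fun i => MvPolynomial.IsHomogeneous.sum _ _ _
      fun j _ => MvPolynomial.isHomogeneous_C_mul_X _ _)
  rw [one_mul] at h
  exact h

lemma coeff_substMat {d : ℕ} (B : Matrix (Fin n) (Fin n) ℝ) {p : MvPolynomial (Fin n) ℝ}
    (hp : p.IsHomogeneous (2 * d)) (mon : Fin n →₀ ℕ) :
    MvPolynomial.coeff mon (substMat B p)
      = ∑ α ∈ monF n d, MvPolynomial.coeff α p
          * MvPolynomial.coeff mon (substMat B (monomial α 1)) := by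
  have hrep : p = ∑ α ∈ monF n d, monomial α (MvPolynomial.coeff α p) := by
    conv_lhs => rw [p.as_sum]
    refine Finset.sum_subset (support_subset_monF hp) fun α _ hα => ?_
    rw [notMem_support_iff.mp hα, map_zero]
  conv_lhs => rw [hrep]
  rw [substMat, map_sum, MvPolynomial.coeff_sum]
  refine Finset.sum_congr rfl fun α _ => ?_
  have : (monomial α (MvPolynomial.coeff α p) : MvPolynomial (Fin n) ℝ)
      = MvPolynomial.C (MvPolynomial.coeff α p) * monomial α 1 := by
    rw [C_mul_monomial, mul_one]
  rw [this, map_mul, aeval_C, MvPolynomial.algebraMap_eq, coeff_C_mul, substMat]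

/-- Key limit lemma: a coefficientwise limit of polynomials that are uniformly
inside the SOS cone (by margin `c‖x‖^{2d}`) stays inside (with margin `(c/2)‖x‖^{2d}`). -/
lemma limit_sos {d : ℕ} (g : ℕ → MvPolynomial (Fin n) ℝ) (glim : MvPolynomial (Fin n) ℝ)
    (hhom : ∀ k, (g k).IsHomogeneous (2 * d)) (hhoml : glim.IsHomogeneous (2 * d))
    (hcv : ∀ mon, Filter.Tendsto (fun k => MvPolynomial.coeff mon (g k)) Filter.atTop
      (nhds (MvPolynomial.coeff mon glim)))
    {c : ℝ} (hc : 0 < c)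
    (hsos : ∀ k, IsSOS (g k - MvPolynomial.C c * (∑ i, (X i : MvPolynomial (Fin n) ℝ) ^ 2) ^ d)) :
    IsSOS (glim - MvPolynomial.C (c/2) * (∑ i, (X i : MvPolynomial (Fin n) ℝ) ^ 2) ^ d)
      ∧ IsSOS glim := by
  classical
  set F := monF n d with hF
  set δ := c / (2 * (F.card + 1)) with hδ
  have hδpos : 0 < δ := by positivity
  have hev : ∀ᶠ k in Filter.atTop, ∀ mon ∈ F,
      |MvPolynomial.coeff mon (g k) - MvPolynomial.coeff mon glim| ≤ δ := by
    rw [Filter.eventually_all_finset]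
    intro mon _
    have h1 := Metric.tendsto_atTop.mp (hcv mon) δ hδpos
    obtain ⟨N, hN⟩ := h1
    filter_upwards [Filter.eventually_ge_atTop N] with k hk
    have := hN k hk
    rw [Real.dist_eq] at this
    exact this.le
  obtain ⟨k, hk⟩ := hev.exists
  set p := glim - g k with hp
  have hphom : p.IsHomogeneous (2 * d) := hhoml.sub (hhom k)
  have hsum : ∑ mon ∈ p.support, |MvPolynomial.coeff mon p| ≤ c / 2 := by
    have hsub : p.support ⊆ F := support_subset_monF hphom
    have h2 : ∑ mon ∈ p.support, |MvPolynomial.coeff mon p|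
        ≤ ∑ mon ∈ F, |MvPolynomial.coeff mon p| :=
      Finset.sum_le_sum_of_subset_of_nonneg hsub (fun _ _ _ => abs_nonneg _)
    have h3 : ∑ mon ∈ F, |MvPolynomial.coeff mon p| ≤ F.card * δ := by
      have := Finset.sum_le_card_nsmul F (fun mon => |MvPolynomial.coeff mon p|) δ
        (fun mon hm => by
          show |MvPolynomial.coeff mon (glim - g k)| ≤ δ
          rw [MvPolynomial.coeff_sub, abs_sub_comm]
          exact hk mon hm)
      simpa [nsmul_eq_mul] using this
    have hkey : δ * (F.card + 1) = c / 2 := by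
      rw [hδ]
      field_simp
    have h4 : (F.card : ℝ) * δ ≤ c / 2 := by nlinarith [hδpos.le]
    linarith
  have hCc : (MvPolynomial.C c : MvPolynomial (Fin n) ℝ)
      = MvPolynomial.C (c/2) + MvPolynomial.C (c/2) := by rw [← map_add]; norm_num
  have keyid : glim - MvPolynomial.C (c/2) * (∑ i, (X i : MvPolynomial (Fin n) ℝ) ^ 2) ^ d
      = (g k - MvPolynomial.C c * (∑ i, (X i : MvPolynomial (Fin n) ℝ) ^ 2) ^ d)
        + (MvPolynomial.C (c/2) * (∑ i, (X i : MvPolynomial (Fin n) ℝ) ^ 2) ^ d + p) := by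
    rw [hp, hCc]
    ring
  have h5 : IsSOS (MvPolynomial.C (c/2) * (∑ i, (X i : MvPolynomial (Fin n) ℝ) ^ 2) ^ d + p) :=
    isSOS_C_S_add_of_homog hphom hsum
  have h6 := (hsos k).add h5
  rw [← keyid] at h6
  refine ⟨h6, ?_⟩
  have hsplit : glim = (glim - MvPolynomial.C (c/2)
      * (∑ i, (X i : MvPolynomial (Fin n) ℝ) ^ 2) ^ d)
      + MvPolynomial.C (c/2) * (∑ i, (X i : MvPolynomial (Fin n) ℝ) ^ 2) ^ d := by ring
  rw [hsplit]
  exact h6.add (isSOS_C_mul (by linarith) (isSOS_S_pow d))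

end SOSAux

/-- for `τ > 0` and homogeneous degree-`2d` polynomials `q_v` in the interior
of the SOS cone, if the iteration `p_{v,0} = 0`,
`p_{v,k+1}(x) = q_v(x) + (1/τ) Σ_{(u,v,σ)∈E} p_{u,k}(A_σ x)` converges coefficientwise to
polynomials `p_{v,∞}`, then each `p_{v,∞}` is SOS, lies in the interior of the SOS cone,
and `τ·p_{v,∞}(x) − p_{u,∞}(A_σ x)` is SOS for every edge `(u,v,σ) ∈ E`. -/
theorem iteration_limit_sos {m n : ℕ} (A : Fin m → Matrix (Fin n) (Fin n) ℝ)
    {V : Type*} [Fintype V] (E : Finset (V × V × Fin m))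
    (d : ℕ) (τ : ℝ) (hτ : 0 < τ) (q : V → MvPolynomial (Fin n) ℝ)
    (hqhom : ∀ v, (q v).IsHomogeneous (2 * d)) (hqint : ∀ v, InIntSOS d (q v))
    (P : ℕ → V → MvPolynomial (Fin n) ℝ)
    (hP0 : ∀ v, P 0 v = 0)
    (hPs : ∀ k v, P (k+1) v = q v +
      MvPolynomial.C τ⁻¹ *
        ∑ e ∈ E.filter (fun e => e.2.1 = v), substMat (A e.2.2) (P k e.1))
    (Pinf : V → MvPolynomial (Fin n) ℝ)
    (hconv : ∀ v (mon : Fin n →₀ ℕ),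
      Tendsto (fun k => MvPolynomial.coeff mon (P k v)) atTop
        (nhds (MvPolynomial.coeff mon (Pinf v)))) :
    (∀ v, IsSOS (Pinf v)) ∧ (∀ v, InIntSOS d (Pinf v)) ∧
    ∀ e ∈ E, IsSOS (MvPolynomial.C τ * Pinf e.2.1 - substMat (A e.2.2) (Pinf e.1)) := by
  classical
  have hhomP : ∀ k v, (P k v).IsHomogeneous (2 * d) := by
    intro k
    induction k with
    | zero => intro v; rw [hP0]; exact MvPolynomial.isHomogeneous_zero _ _ _
    | succ k ih =>
      intro v
      rw [hPs]
      exact (hqhom v).add ((MvPolynomial.IsHomogeneous.sum _ _ _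
        (fun e _ => substMat_isHomogeneous (ih e.1))).C_mul τ⁻¹)
  have hSOSq : ∀ v, IsSOS (q v) := by
    intro v
    obtain ⟨ε, hε, hqs⟩ := hqint v
    have hid : q v = (q v - MvPolynomial.C ε * (∑ i, MvPolynomial.X i ^ 2) ^ d)
        + MvPolynomial.C ε * (∑ i, MvPolynomial.X i ^ 2) ^ d := by ring
    rw [hid]
    exact hqs.add (isSOS_C_mul hε.le (isSOS_S_pow d))
  have hSOSP : ∀ k v, IsSOS (P k v) := by
    intro k
    induction k with
    | zero => intro v; rw [hP0]; exact isSOS_zero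
    | succ k ih =>
      intro v
      rw [hPs]
      exact (hSOSq v).add (isSOS_C_mul (inv_nonneg.mpr hτ.le)
        (IsSOS.finsetSum fun e _ => isSOS_substMat (ih e.1)))
  have hhomInf : ∀ v, (Pinf v).IsHomogeneous (2 * d) := by
    intro v
    apply isHomogeneous_of
    intro mon hne
    by_contra hdeg
    have hz : ∀ k, MvPolynomial.coeff mon (P k v) = 0 :=
      fun k => (hhomP k v).coeff_eq_zero hdeg
    have h1 : Tendsto (fun k => MvPolynomial.coeff mon (P k v)) atTop (nhds 0) := by
      have hfun : (fun k => MvPolynomial.coeff mon (P k v)) = fun _ => (0 : ℝ) := funext hz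
      rw [hfun]
      exact tendsto_const_nhds
    exact hne (tendsto_nhds_unique (hconv v mon) h1)
  have main : ∀ v, IsSOS (Pinf v) ∧ InIntSOS d (Pinf v) := by
    intro v
    obtain ⟨ε, hε, hqs⟩ := hqint v
    have hsos : ∀ k, IsSOS (P (k+1) v
        - MvPolynomial.C ε * (∑ i, MvPolynomial.X i ^ 2) ^ d) := by
      intro k
      rw [hPs]
      have hid : q v + MvPolynomial.C τ⁻¹
            * (∑ e ∈ E.filter (fun e => e.2.1 = v), substMat (A e.2.2) (P k e.1))
            - MvPolynomial.C ε * (∑ i, MvPolynomial.X i ^ 2) ^ d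
          = (q v - MvPolynomial.C ε * (∑ i, MvPolynomial.X i ^ 2) ^ d)
            + MvPolynomial.C τ⁻¹
              * ∑ e ∈ E.filter (fun e => e.2.1 = v), substMat (A e.2.2) (P k e.1) := by
        ring
      rw [hid]
      exact hqs.add (isSOS_C_mul (inv_nonneg.mpr hτ.le)
        (IsSOS.finsetSum fun e _ => isSOS_substMat (hSOSP k e.1)))
    have hlim := limit_sos (fun k => P (k+1) v) (Pinf v) (fun k => hhomP (k+1) v)
      (hhomInf v) (fun mon => (hconv v mon).comp (tendsto_add_atTop_nat 1)) hε hsos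
    exact ⟨hlim.2, ⟨ε/2, by linarith, hlim.1⟩⟩
  refine ⟨fun v => (main v).1, fun v => (main v).2, ?_⟩
  intro e he
  obtain ⟨ε, hε, hqs⟩ := hqint e.2.1
  have he' : e ∈ E.filter (fun e' => e'.2.1 = e.2.1) := Finset.mem_filter.mpr ⟨he, rfl⟩
  have hsos : ∀ k, IsSOS ((MvPolynomial.C τ * P (k+1) e.2.1 - substMat (A e.2.2) (P k e.1))
      - MvPolynomial.C (τ * ε) * (∑ i, MvPolynomial.X i ^ 2) ^ d) := by
    intro k
    rw [hPs k e.2.1]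
    rw [← Finset.add_sum_erase _ _ he']
    have hCτ : (MvPolynomial.C τ : MvPolynomial (Fin n) ℝ) * MvPolynomial.C τ⁻¹ = 1 := by
      rw [← map_mul, mul_inv_cancel₀ hτ.ne', map_one]
    have hCτε : (MvPolynomial.C (τ * ε) : MvPolynomial (Fin n) ℝ)
        = MvPolynomial.C τ * MvPolynomial.C ε := by rw [map_mul]
    have key : MvPolynomial.C τ * (q e.2.1 + MvPolynomial.C τ⁻¹ *
          (substMat (A e.2.2) (P k e.1)
            + ∑ e' ∈ (E.filter (fun e' => e'.2.1 = e.2.1)).erase e,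
              substMat (A e'.2.2) (P k e'.1)))
          - substMat (A e.2.2) (P k e.1)
          - MvPolynomial.C (τ * ε) * (∑ i, MvPolynomial.X i ^ 2) ^ d
        = MvPolynomial.C τ
            * (q e.2.1 - MvPolynomial.C ε * (∑ i, MvPolynomial.X i ^ 2) ^ d)
          + ∑ e' ∈ (E.filter (fun e' => e'.2.1 = e.2.1)).erase e,
              substMat (A e'.2.2) (P k e'.1) := by
      linear_combination (substMat (A e.2.2) (P k e.1)
        + ∑ e' ∈ (E.filter (fun e' => e'.2.1 = e.2.1)).erase e,
            substMat (A e'.2.2) (P k e'.1)) * hCτ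
        - ((∑ i, MvPolynomial.X i ^ 2) ^ d) * hCτε
    rw [key]
    exact (isSOS_C_mul hτ.le hqs).add
      (IsSOS.finsetSum fun e' _ => isSOS_substMat (hSOSP k e'.1))
  have hhomg : ∀ k, (MvPolynomial.C τ * P (k+1) e.2.1
      - substMat (A e.2.2) (P k e.1)).IsHomogeneous (2 * d) :=
    fun k => ((hhomP (k+1) e.2.1).C_mul τ).sub (substMat_isHomogeneous (hhomP k e.1))
  have hhomgl : (MvPolynomial.C τ * Pinf e.2.1
      - substMat (A e.2.2) (Pinf e.1)).IsHomogeneous (2 * d) :=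
    ((hhomInf e.2.1).C_mul τ).sub (substMat_isHomogeneous (hhomInf e.1))
  have hcvg : ∀ mon, Tendsto (fun k => MvPolynomial.coeff mon
      (MvPolynomial.C τ * P (k+1) e.2.1 - substMat (A e.2.2) (P k e.1))) atTop
      (nhds (MvPolynomial.coeff mon
        (MvPolynomial.C τ * Pinf e.2.1 - substMat (A e.2.2) (Pinf e.1)))) := by
    intro mon
    have hrw : ∀ k, MvPolynomial.coeff mon
          (MvPolynomial.C τ * P (k+1) e.2.1 - substMat (A e.2.2) (P k e.1))
        = τ * MvPolynomial.coeff mon (P (k+1) e.2.1)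
          - ∑ α ∈ monF n d, MvPolynomial.coeff α (P k e.1)
              * MvPolynomial.coeff mon (substMat (A e.2.2) (MvPolynomial.monomial α 1)) := by
      intro k
      rw [MvPolynomial.coeff_sub, MvPolynomial.coeff_C_mul,
        coeff_substMat (A e.2.2) (hhomP k e.1) mon]
    have hrwl : MvPolynomial.coeff mon
          (MvPolynomial.C τ * Pinf e.2.1 - substMat (A e.2.2) (Pinf e.1))
        = τ * MvPolynomial.coeff mon (Pinf e.2.1)
          - ∑ α ∈ monF n d, MvPolynomial.coeff α (Pinf e.1)
              * MvPolynomial.coeff mon (substMat (A e.2.2) (MvPolynomial.monomial α 1)) := by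
      rw [MvPolynomial.coeff_sub, MvPolynomial.coeff_C_mul,
        coeff_substMat (A e.2.2) (hhomInf e.1) mon]
    simp only [hrw, hrwl]
    exact (((hconv e.2.1 mon).comp (tendsto_add_atTop_nat 1)).const_mul τ).sub
      (tendsto_finset_sum _ fun α _ => (hconv e.1 α).mul_const _)
  exact (limit_sos _ _ hhomg hhomgl hcvg (mul_pos hτ hε) hsos).2
end
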